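/- Fix n ≥ 1 and let λ_1, λ_2 ∈ ℝ with λ_1λ_2 ≥ 0 and |λ_1| ≤ |λ_2|. Then for every monic hyperbolic polynomial P of degree n, the roots of the polynomial x ↦ P(x+λ_1) − λ_1P′(x+λ_1) are majorized by the roots of x ↦ P(x+λ_2) − λ_2P′(x+λ_2). -/

import Mathlib

open Polynomial Finset

/-- Classical majorization of `n`-tuples via convex functions. -/
def MajorizedOn (n : ℕ) (x y : ℕ → ℝ) : Prop :=
  ∀ f : ℝ → ℝ, ConvexOn ℝ Set.univ f →
    ∑ i ∈ Finset.range n, f (x i) ≤ ∑ i ∈ Finset.range n, f (y i)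

namespace DeformedPencilAux

open Matrix

variable {n : ℕ}

lemma aux_det_field {K : Type*} [Field K] (g : Fin n → K) (c : K) (hg : ∀ i, g i ≠ 0) :
    (Matrix.of fun i j => (if i = j then g i else 0) + c).det
      = ∏ i, g i + c * ∑ i, ∏ j ∈ Finset.univ.erase i, g j := by
  have hrw : (Matrix.of fun i j => (if i = j then g i else 0) + c)
      = Matrix.diagonal g + Matrix.replicateCol Unit (fun _ => c) * Matrix.replicateRow Unit (fun _ => (1:K)) := by
    ext i j
    by_cases h : i = j <;>
      simp [h, Matrix.diagonal_apply, Matrix.mul_apply, Matrix.replicateCol_apply, Matrix.replicateRow_apply]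
  have hdet : IsUnit (Matrix.diagonal g).det := by
    rw [Matrix.det_diagonal]
    exact (Finset.prod_ne_zero_iff.mpr fun i _ => hg i).isUnit
  have hinv : (Matrix.diagonal g)⁻¹ = Matrix.diagonal (fun i => (g i)⁻¹) := by
    apply Matrix.inv_eq_right_inv
    rw [Matrix.diagonal_mul_diagonal]
    have : (fun i => g i * (g i)⁻¹) = fun _ => (1:K) := funext fun i => mul_inv_cancel₀ (hg i)
    rw [this, Matrix.diagonal_one]
  rw [hrw, Matrix.det_add_replicateCol_mul_replicateRow hdet, Matrix.det_diagonal, Matrix.det_unique, hinv]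
  simp only [Matrix.add_apply, Matrix.one_apply_eq, Matrix.mul_apply, Matrix.replicateRow_apply,
    Matrix.replicateCol_apply, Matrix.diagonal_apply, Finset.univ_unique,
    Finset.sum_singleton, one_mul, Finset.sum_ite_eq, Finset.sum_ite_eq', Finset.mem_univ, if_true]
  rw [mul_add, mul_one, Finset.mul_sum]
  congr 1
  rw [Finset.mul_sum]
  apply Finset.sum_congr rfl
  intro i _
  rw [← Finset.mul_prod_erase Finset.univ g (Finset.mem_univ i)]
  field_simp [hg i]

lemma aux_det_poly (g : Fin n → Polynomial ℝ) (c : Polynomial ℝ) (hg : ∀ i, g i ≠ 0) :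
    (Matrix.of fun i j => (if i = j then g i else 0) + c).det
      = ∏ i, g i + c * ∑ i, ∏ j ∈ Finset.univ.erase i, g j := by
  set K := FractionRing (Polynomial ℝ)
  set φ : Polynomial ℝ →+* K := algebraMap (Polynomial ℝ) K
  have hinj : Function.Injective φ := IsFractionRing.injective (Polynomial ℝ) K
  apply hinj
  rw [RingHom.map_det]
  have hmap : (Matrix.of fun i j => (if i = j then g i else 0) + c).map φ
      = Matrix.of fun i j => (if i = j then φ (g i) else 0) + φ c := by
    ext i j
    by_cases h : i = j <;> simp [h, Matrix.map_apply]
  rw [RingHom.mapMatrix_apply, hmap, aux_det_field (fun i => φ (g i)) (φ c)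
    (fun i => fun h => hg i (hinj (by simpa using h)))]
  simp only [map_add, _root_.map_mul, map_prod, map_sum]

lemma gne (lam a : ℝ) : X + C lam - C a ≠ 0 := by
  have h : X + C lam - C a = X + C (lam - a) := by rw [map_sub]; ring
  rw [h]
  exact Polynomial.X_add_C_ne_zero _

lemma charpoly_M (y : Fin n → ℝ) (lam : ℝ) :
    (Matrix.diagonal y + lam • Matrix.of (fun i j : Fin n => if i = j then (0:ℝ) else 1)).charpoly
      = ∏ i, (X + C lam - C (y i))
        - C lam * ∑ i, ∏ j ∈ Finset.univ.erase i, (X + C lam - C (y j)) := by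
  rw [Matrix.charpoly]
  have hcm : charmatrix (Matrix.diagonal y
        + lam • Matrix.of (fun i j : Fin n => if i = j then (0:ℝ) else 1))
      = Matrix.of fun i j => (if i = j then (X + C lam - C (y i)) else 0) + (-C lam) := by
    ext i j
    by_cases h : i = j
    · subst h
      rw [Matrix.charmatrix_apply_eq]
      simp [Matrix.add_apply, Matrix.smul_apply, Matrix.diagonal_apply_eq]
      ring
    · rw [Matrix.charmatrix_apply_ne _ _ _ h]
      simp [h, Matrix.add_apply, Matrix.smul_apply, Matrix.diagonal_apply_ne _ h]
  rw [hcm, aux_det_poly _ _ (fun i => gne lam (y i))]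
  ring

lemma derivative_finset_prod {ι : Type*} [DecidableEq ι] (s : Finset ι) (f : ι → Polynomial ℝ) :
    derivative (∏ i ∈ s, f i) = ∑ i ∈ s, (∏ j ∈ s.erase i, f j) * derivative (f i) := by
  classical
  induction s using Finset.induction_on with
  | empty => simp
  | insert _ _ hx ih =>
    rename_i a s
    rw [Finset.prod_insert hx, derivative_mul, ih, Finset.sum_insert hx, Finset.erase_insert hx,
      Finset.mul_sum, mul_comm (derivative (f a))]
    congr 1
    apply Finset.sum_congr rfl
    intro i hi
    rw [Finset.erase_insert_of_ne (by rintro rfl; exact hx hi), Finset.prod_insert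
      (fun h => hx (Finset.mem_of_mem_erase h))]
    ring

lemma comp_form (x : ℕ → ℝ) (lam : ℝ) :
    ((∏ i ∈ Finset.range n, (X - C (x i)))
        - C lam * derivative (∏ i ∈ Finset.range n, (X - C (x i)))).comp (X + C lam)
      = ∏ i : Fin n, (X + C lam - C (x i))
        - C lam * ∑ i : Fin n, ∏ j ∈ Finset.univ.erase i, (X + C lam - C (x j)) := by
  rw [← Fin.prod_univ_eq_prod_range (fun i => (X : Polynomial ℝ) - C (x i)) n]
  rw [derivative_finset_prod]
  rw [sub_comp, mul_comp, C_comp]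
  rw [show ((∑ i : Fin n, (∏ j ∈ Finset.univ.erase i, (X - C (x j.val)))
      * derivative ((X : Polynomial ℝ) - C (x i.val)))).comp (X + C lam)
    = ∑ i : Fin n, ((∏ j ∈ Finset.univ.erase i, (X - C (x j.val)))
      * derivative ((X : Polynomial ℝ) - C (x i.val))).comp (X + C lam)
    from map_sum (compRingHom (X + C lam)) _ _]
  rw [show ((∏ i : Fin n, ((X : Polynomial ℝ) - C (x i.val)))).comp (X + C lam)
    = ∏ i : Fin n, ((X : Polynomial ℝ) - C (x i.val)).comp (X + C lam)
    from map_prod (compRingHom (X + C lam)) _ _]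
  simp only [derivative_sub, derivative_X, derivative_C, sub_zero, mul_one, sub_comp, X_comp,
    C_comp, mul_comp, Polynomial.prod_comp]

lemma charpoly_diag (w : Fin n → ℝ) :
    (Matrix.diagonal w).charpoly = ∏ i, (X - C (w i)) := by
  rw [Matrix.charpoly]
  have : charmatrix (Matrix.diagonal w) = Matrix.diagonal fun i => (X : Polynomial ℝ) - C (w i) := by
    ext i j
    by_cases h : i = j
    · subst h; rw [Matrix.charmatrix_apply_eq, Matrix.diagonal_apply_eq, Matrix.diagonal_apply_eq]
    · rw [Matrix.charmatrix_apply_ne _ _ _ h, Matrix.diagonal_apply_ne _ h,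
        Matrix.diagonal_apply_ne _ h, map_zero, neg_zero]
  rw [this, Matrix.det_diagonal]

lemma charpoly_conj (U : Matrix.unitaryGroup (Fin n) ℝ) (A : Matrix (Fin n) (Fin n) ℝ) :
    ((U : Matrix (Fin n) (Fin n) ℝ) * A * (star U : Matrix (Fin n) (Fin n) ℝ)).charpoly
      = A.charpoly := by
  set ψ : Matrix (Fin n) (Fin n) ℝ →+* Matrix (Fin n) (Fin n) (Polynomial ℝ) :=
    (C : ℝ →+* Polynomial ℝ).mapMatrix with hψ
  have hUV : (U : Matrix (Fin n) (Fin n) ℝ) * (star U : Matrix (Fin n) (Fin n) ℝ) = 1 :=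
    Matrix.mem_unitaryGroup_iff.mp U.2
  have h1 : charmatrix ((U : Matrix (Fin n) (Fin n) ℝ) * A * (star U : Matrix (Fin n) (Fin n) ℝ))
      = ψ (U : Matrix (Fin n) (Fin n) ℝ) * charmatrix A * ψ (star U : Matrix (Fin n) (Fin n) ℝ) := by
    show Matrix.scalar (Fin n) X - ψ _ = _
    rw [show charmatrix A = Matrix.scalar (Fin n) X - ψ A from rfl]
    rw [mul_sub, sub_mul]
    congr 1
    · rw [← (Matrix.scalar_commute (X : Polynomial ℝ) (Commute.all X)
        (ψ (U : Matrix (Fin n) (Fin n) ℝ))).eq, mul_assoc, ← _root_.map_mul, hUV,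
        _root_.map_one, mul_one]
    · rw [← _root_.map_mul, ← _root_.map_mul]
  rw [Matrix.charpoly, Matrix.charpoly, h1, Matrix.det_mul, Matrix.det_mul]
  have hd : (ψ (U : Matrix (Fin n) (Fin n) ℝ)).det
      * (ψ (star U : Matrix (Fin n) (Fin n) ℝ)).det = 1 := by
    rw [← Matrix.det_mul, ← _root_.map_mul, hUV, _root_.map_one, Matrix.det_one]
  rw [mul_comm ((ψ (U : Matrix (Fin n) (Fin n) ℝ)).det), mul_assoc, hd, mul_one]

lemma schur_ineq (U : Matrix.unitaryGroup (Fin n) ℝ) (μ : Fin n → ℝ) (f : ℝ → ℝ)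
    (hf : ConvexOn ℝ Set.univ f) :
    ∑ i, f (((U : Matrix (Fin n) (Fin n) ℝ) * Matrix.diagonal μ
      * (star U : Matrix (Fin n) (Fin n) ℝ)) i i) ≤ ∑ i, f (μ i) := by
  have hUV : (U : Matrix (Fin n) (Fin n) ℝ) * (star U : Matrix (Fin n) (Fin n) ℝ) = 1 :=
    Matrix.mem_unitaryGroup_iff.mp U.2
  have hVU : (star U : Matrix (Fin n) (Fin n) ℝ) * (U : Matrix (Fin n) (Fin n) ℝ) = 1 :=
    (Unitary.mem_iff.mp U.2).1
  set u : Matrix (Fin n) (Fin n) ℝ := (U : Matrix (Fin n) (Fin n) ℝ)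
  have hentry : ∀ i, ((u * Matrix.diagonal μ * star u) i i) = ∑ j, (u i j)^2 * μ j := by
    intro i
    rw [Matrix.mul_apply]
    simp only [Matrix.mul_apply, Matrix.diagonal_apply, Matrix.star_apply, star_trivial]
    simp only [mul_ite, mul_zero, Finset.sum_ite_eq, Finset.sum_ite_eq', Finset.mem_univ,
      if_true]
    exact Finset.sum_congr rfl fun j _ => by ring
  have hrow : ∀ i, ∑ j, (u i j)^2 = 1 := by
    intro i
    have := congrFun (congrFun hUV i) i
    rw [Matrix.mul_apply] at this
    simp only [Matrix.star_apply, star_trivial, Matrix.one_apply_eq] at this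
    simpa [sq] using this
  have hcol : ∀ j, ∑ i, (u i j)^2 = 1 := by
    intro j
    have := congrFun (congrFun hVU j) j
    rw [Matrix.mul_apply] at this
    simp only [Matrix.star_apply, star_trivial, Matrix.one_apply_eq] at this
    simpa [sq, mul_comm] using this
  calc ∑ i, f ((u * Matrix.diagonal μ * star u) i i)
      ≤ ∑ i, ∑ j, (u i j)^2 * f (μ j) := by
        apply Finset.sum_le_sum
        intro i _
        rw [hentry i]
        have := hf.map_sum_le (t := Finset.univ) (w := fun j => (u i j)^2) (p := μ)
          (fun j _ => sq_nonneg _) (hrow i) (fun j _ => Set.mem_univ _)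
        simpa [smul_eq_mul] using this
    _ = ∑ j, (∑ i, (u i j)^2) * f (μ j) := by
        rw [Finset.sum_comm]
        exact Finset.sum_congr rfl fun j _ => by rw [Finset.sum_mul]
    _ = ∑ j, f (μ j) := by
        exact Finset.sum_congr rfl fun j _ => by rw [hcol j, one_mul]

end DeformedPencilAux

open DeformedPencilAux Matrix

/-- Theorem (main2): if `λ₁λ₂ ≥ 0` and `|λ₁| ≤ |λ₂|`, then the roots of
`(1-λ₁D)e^{λ₁D}P`, i.e. of `x ↦ P(x+λ₁) - λ₁P'(x+λ₁)`, are majorized by those of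
`(1-λ₂D)e^{λ₂D}P`. -/
theorem deformed_pencil_monotone
    (n : ℕ) (hn : 1 ≤ n) (lam₁ lam₂ : ℝ)
    (hsign : 0 ≤ lam₁ * lam₂) (habs : |lam₁| ≤ |lam₂|)
    (x : ℕ → ℝ) (P : Polynomial ℝ)
    (hP : P = ∏ i ∈ Finset.range n, (X - C (x i))) :
    ∃ u v : ℕ → ℝ,
      (P - C lam₁ * derivative P).comp (X + C lam₁) =
        ∏ i ∈ Finset.range n, (X - C (u i)) ∧
      (P - C lam₂ * derivative P).comp (X + C lam₂) =
        ∏ i ∈ Finset.range n, (X - C (v i)) ∧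
      MajorizedOn n u v := by
  classical
  set y : Fin n → ℝ := fun i => x i.val with hy
  set E : Matrix (Fin n) (Fin n) ℝ := Matrix.of fun i j => if i = j then (0:ℝ) else 1 with hE
  have hHerm : ∀ lam : ℝ, (Matrix.diagonal y + lam • E).IsHermitian := by
    intro lam
    show (Matrix.diagonal y + lam • E)ᴴ = _
    ext i j
    by_cases h : i = j
    · subst h; simp [hE]
    · simp [Matrix.conjTranspose_apply, Matrix.add_apply, Matrix.smul_apply,
        Matrix.diagonal_apply_ne, h, Ne.symm h, hE, Matrix.of_apply]
  -- the characteristic polynomial identity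
  have hkey : ∀ lam : ℝ, (P - C lam * derivative P).comp (X + C lam)
      = (Matrix.diagonal y + lam • E).charpoly := by
    intro lam
    rw [hP, comp_form x lam, hE, charpoly_M y lam]
  -- spectral decompositions
  have hspec : ∀ lam : ℝ, (Matrix.diagonal y + lam • E)
      = ((hHerm lam).eigenvectorUnitary : Matrix (Fin n) (Fin n) ℝ)
        * Matrix.diagonal ((hHerm lam).eigenvalues)
        * (star ((hHerm lam).eigenvectorUnitary) : Matrix (Fin n) (Fin n) ℝ) := by
    intro lam
    have h := (hHerm lam).spectral_theorem
    rw [RCLike.ofReal_real_eq_id] at h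
    simpa using h
  have hcp : ∀ lam : ℝ, (Matrix.diagonal y + lam • E).charpoly
      = ∏ i : Fin n, (X - C ((hHerm lam).eigenvalues i)) := by
    intro lam
    have h := charpoly_conj ((hHerm lam).eigenvectorUnitary)
      (Matrix.diagonal ((hHerm lam).eigenvalues))
    rw [← hspec lam] at h
    rw [h, charpoly_diag]
  set μ₁ : Fin n → ℝ := (hHerm lam₁).eigenvalues with hμ₁
  set μ₂ : Fin n → ℝ := (hHerm lam₂).eigenvalues with hμ₂
  refine ⟨fun k => if h : k < n then μ₁ ⟨k, h⟩ else 0,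
          fun k => if h : k < n then μ₂ ⟨k, h⟩ else 0, ?_, ?_, ?_⟩
  · rw [hkey lam₁, hcp lam₁, ← Fin.prod_univ_eq_prod_range
      (fun k => X - C (if h : k < n then μ₁ ⟨k, h⟩ else 0)) n]
    exact Finset.prod_congr rfl fun i _ => by rw [dif_pos i.isLt]
  · rw [hkey lam₂, hcp lam₂, ← Fin.prod_univ_eq_prod_range
      (fun k => X - C (if h : k < n then μ₂ ⟨k, h⟩ else 0)) n]
    exact Finset.prod_congr rfl fun i _ => by rw [dif_pos i.isLt]
  · -- majorization
    intro f hf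
    rw [← Fin.sum_univ_eq_sum_range (fun k => f (if h : k < n then μ₁ ⟨k, h⟩ else 0)) n,
      ← Fin.sum_univ_eq_sum_range (fun k => f (if h : k < n then μ₂ ⟨k, h⟩ else 0)) n]
    have hrw1 : ∀ i : Fin n, f (if h : (i : ℕ) < n then μ₁ ⟨i, h⟩ else 0) = f (μ₁ i) :=
      fun i => by rw [dif_pos i.isLt]
    have hrw2 : ∀ i : Fin n, f (if h : (i : ℕ) < n then μ₂ ⟨i, h⟩ else 0) = f (μ₂ i) :=
      fun i => by rw [dif_pos i.isLt]
    rw [Finset.sum_congr rfl fun i _ => hrw1 i, Finset.sum_congr rfl fun i _ => hrw2 i]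
    -- now ∑ f (μ₁ i) ≤ ∑ f (μ₂ i)
    by_cases hzero : lam₂ = 0
    · have hz1 : lam₁ = 0 := by
        have : |lam₁| ≤ 0 := by simpa [hzero] using habs
        simpa using abs_nonpos_iff.mp this
      rw [hμ₁, hμ₂, hz1, hzero]
    · set s : ℝ := lam₁ / lam₂ with hs
      have hs0 : 0 ≤ s := by
        have : s = (lam₁ * lam₂) / (lam₂ ^ 2) := by
          rw [hs, div_eq_div_iff hzero (pow_ne_zero 2 hzero)]
          ring
        rw [this]
        positivity
      have hs1 : s ≤ 1 := by
        have habs' : |s| ≤ 1 := by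
          rw [hs, abs_div]
          rw [div_le_one (abs_pos.mpr hzero)]
          exact habs
        exact le_trans (le_abs_self s) habs'
      have hmul : s * lam₂ = lam₁ := div_mul_cancel₀ _ hzero
      have hconv : Matrix.diagonal y + lam₁ • E
          = s • (Matrix.diagonal y + lam₂ • E) + (1 - s) • Matrix.diagonal y := by
        rw [smul_add, smul_smul, hmul, sub_smul, one_smul]
        abel
      set U₁ := (hHerm lam₁).eigenvectorUnitary with hU₁def
      set U₂ := (hHerm lam₂).eigenvectorUnitary with hU₂def
      set u₁ : Matrix (Fin n) (Fin n) ℝ := (U₁ : Matrix (Fin n) (Fin n) ℝ) with hu₁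
      set B : Matrix (Fin n) (Fin n) ℝ :=
        (star U₁ : Matrix (Fin n) (Fin n) ℝ) * (Matrix.diagonal y + lam₂ • E) * u₁ with hB
      set Cm : Matrix (Fin n) (Fin n) ℝ :=
        (star U₁ : Matrix (Fin n) (Fin n) ℝ) * Matrix.diagonal y * u₁ with hCm
      have hdiagm : Matrix.diagonal μ₁ = s • B + (1 - s) • Cm := by
        have h := (hHerm lam₁).conjStarAlgAut_star_eigenvectorUnitary
        rw [RCLike.ofReal_real_eq_id] at h
        have h' : (star U₁ : Matrix (Fin n) (Fin n) ℝ) * (Matrix.diagonal y + lam₁ • E) * u₁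
            = Matrix.diagonal μ₁ := by simpa using h
        rw [← h', hconv]
        rw [Matrix.mul_add, Matrix.add_mul, Matrix.mul_smul, Matrix.smul_mul,
          Matrix.mul_smul, Matrix.smul_mul]
      have hentry : ∀ i, μ₁ i = s * (B i i) + (1 - s) * (Cm i i) := by
        intro i
        have := congrFun (congrFun hdiagm i) i
        rw [Matrix.diagonal_apply_eq] at this
        simpa [Matrix.add_apply, Matrix.smul_apply, smul_eq_mul] using this
      have hjens : ∀ i, f (μ₁ i) ≤ s * f (B i i) + (1 - s) * f (Cm i i) := by
        intro i
        rw [hentry i]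
        have := hf.2 (Set.mem_univ (B i i)) (Set.mem_univ (Cm i i))
          (show (0:ℝ) ≤ s from hs0) (show (0:ℝ) ≤ 1 - s by linarith)
          (show s + (1 - s) = 1 by ring)
        simpa [smul_eq_mul] using this
      -- Schur bound for B
      have hspec₂ : Matrix.diagonal y + lam₂ • E
          = (U₂ : Matrix (Fin n) (Fin n) ℝ) * Matrix.diagonal μ₂
            * (star U₂ : Matrix (Fin n) (Fin n) ℝ) := hspec lam₂
      have hBschur : ∑ i, f (B i i) ≤ ∑ i, f (μ₂ i) := by
        set W : Matrix.unitaryGroup (Fin n) ℝ := star U₁ * U₂ with hW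
        have hWc : (W : Matrix (Fin n) (Fin n) ℝ)
            = (star U₁ : Matrix (Fin n) (Fin n) ℝ) * (U₂ : Matrix (Fin n) (Fin n) ℝ) := rfl
        have hWs : (star W : Matrix (Fin n) (Fin n) ℝ)
            = (star U₂ : Matrix (Fin n) (Fin n) ℝ) * u₁ := by
          show star ((W : Matrix (Fin n) (Fin n) ℝ)) = _
          rw [hWc, Matrix.star_mul, star_star]
        have hBW : B = (W : Matrix (Fin n) (Fin n) ℝ) * Matrix.diagonal μ₂
            * (star W : Matrix (Fin n) (Fin n) ℝ) := by
          rw [hB, hspec₂, hWs, hWc]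
          noncomm_ring
        rw [hBW]
        exact schur_ineq W μ₂ f hf
      -- Schur bound for Cm
      have hCschur : ∑ i, f (Cm i i) ≤ ∑ i, f (y i) := by
        set W : Matrix.unitaryGroup (Fin n) ℝ := star U₁ with hW
        have hWc : (W : Matrix (Fin n) (Fin n) ℝ)
            = (star U₁ : Matrix (Fin n) (Fin n) ℝ) := rfl
        have hWs : (star W : Matrix (Fin n) (Fin n) ℝ) = u₁ := by
          show star ((W : Matrix (Fin n) (Fin n) ℝ)) = _
          rw [hWc, star_star]
        have hCW : Cm = (W : Matrix (Fin n) (Fin n) ℝ) * Matrix.diagonal y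
            * (star W : Matrix (Fin n) (Fin n) ℝ) := by
          rw [hCm, hWs, hWc]
        rw [hCW]
        exact schur_ineq W y f hf
      -- Schur bound for the diagonal of M lam₂
      have hyschur : ∑ i, f (y i) ≤ ∑ i, f (μ₂ i) := by
        have hydiag : ∀ i, y i = (Matrix.diagonal y + lam₂ • E) i i := by
          intro i
          simp [Matrix.add_apply, Matrix.smul_apply, Matrix.diagonal_apply_eq, hE]
        calc ∑ i, f (y i) = ∑ i, f ((Matrix.diagonal y + lam₂ • E) i i) :=
              Finset.sum_congr rfl fun i _ => by rw [hydiag i]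
          _ ≤ ∑ i, f (μ₂ i) := by
              rw [show (∑ i, f ((Matrix.diagonal y + lam₂ • E) i i))
                  = ∑ i, f (((U₂ : Matrix (Fin n) (Fin n) ℝ) * Matrix.diagonal μ₂
                    * (star U₂ : Matrix (Fin n) (Fin n) ℝ)) i i) from
                Finset.sum_congr rfl fun i _ => by rw [← hspec₂]]
              exact schur_ineq U₂ μ₂ f hf
      calc ∑ i, f (μ₁ i) ≤ ∑ i, (s * f (B i i) + (1 - s) * f (Cm i i)) :=
            Finset.sum_le_sum fun i _ => hjens i
        _ = s * (∑ i, f (B i i)) + (1 - s) * (∑ i, f (Cm i i)) := by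
            rw [Finset.sum_add_distrib, Finset.mul_sum, Finset.mul_sum]
        _ ≤ s * (∑ i, f (μ₂ i)) + (1 - s) * (∑ i, f (μ₂ i)) := by
            have h1 : s * (∑ i, f (B i i)) ≤ s * (∑ i, f (μ₂ i)) :=
              mul_le_mul_of_nonneg_left hBschur hs0
            have h2 : (1 - s) * (∑ i, f (Cm i i)) ≤ (1 - s) * (∑ i, f (μ₂ i)) :=
              mul_le_mul_of_nonneg_left (le_trans hCschur hyschur) (by linarith)
            linarith
        _ = ∑ i, f (μ₂ i) := by ring
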